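/- Let k be a field and let g : ℝ → ℝ be a function that is bounded above on [0,1] (i.e., there exists B ∈ ℝ with g(t) ≤ B for all t ∈ [0,1]). Then the persistence module M_g : P ⥤ ModuleCat k is indecomposable: whenever M_g is isomorphic in the functor category to a biproduct A ⊞ B of two functors A, B : P ⥤ ModuleCat k, either A(p) = 0 for all p ∈ P or B(p) = 0 for all p ∈ P. -/

import Mathlib

open CategoryTheory

noncomputable section

/-- The map induced on connected components by an inclusion of subspaces. -/
def compMap {Y : Type} [TopologicalSpace Y] {A B : Set Y} (h : A ⊆ B) :
    ConnectedComponents A → ConnectedComponents B :=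
  (continuous_inclusion h).connectedComponentsMap

lemma compMap_id {Y : Type} [TopologicalSpace Y] {A : Set Y} (h : A ⊆ A) :
    compMap h = id := by
  funext x
  obtain ⟨y, rfl⟩ := ConnectedComponents.surjective_coe x
  rfl

lemma compMap_comp {Y : Type} [TopologicalSpace Y] {A B C : Set Y}
    (hAB : A ⊆ B) (hBC : B ⊆ C) (hAC : A ⊆ C) :
    compMap hAC = compMap hBC ∘ compMap hAB := by
  funext x
  obtain ⟨y, rfl⟩ := ConnectedComponents.surjective_coe x
  rfl

/-- The persistence module (valued in free `k`-modules on connected components)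
associated to a monotone family of subspaces indexed by a poset: it assigns to `p`
the free `k`-module on the set of connected components of `A p`, and to each
relation `p ≤ q` the `k`-linear map sending the basis element of a connected
component of `A p` to the basis element of the connected component of `A q`
containing it. -/
def compFunctor (k : Type) [Field k] {α : Type} [Preorder α] {Y : Type} [TopologicalSpace Y]
    (A : α → Set Y) (mono : Monotone A) : α ⥤ ModuleCat k where
  obj p := ModuleCat.of k (ConnectedComponents (A p) →₀ k)
  map {p q} h := ModuleCat.ofHom (Finsupp.lmapDomain k k (compMap (mono (leOfHom h))))
  map_id p := by
    apply ModuleCat.hom_ext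
    show Finsupp.lmapDomain k k _ = _
    rw [compMap_id]; exact Finsupp.lmapDomain_id _ _
  map_comp {p q r} f g := by
    apply ModuleCat.hom_ext
    show Finsupp.lmapDomain k k _ = _
    rw [compMap_comp (mono (leOfHom f)) (mono (leOfHom g))]
    exact Finsupp.lmapDomain_comp _ _ _ _

/-- The sublevel set `S(a,b,c) = {t ∈ ℝ : a ≤ t ≤ b and g t ≤ c}`. -/
def Slev (g : ℝ → ℝ) (a b c : ℝ) : Set ℝ := {t : ℝ | a ≤ t ∧ t ≤ b ∧ g t ≤ c}

/-- The indexing poset `P = {(a,b,c) ∈ ℝ³ : 0 ≤ a ≤ b ≤ 1}` with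
`(a,b,c) ⊑ (a',b',c')` iff `a' ≤ a`, `b ≤ b'` and `c ≤ c'`. -/
def PP : Type := {p : ℝ × ℝ × ℝ // 0 ≤ p.1 ∧ p.1 ≤ p.2.1 ∧ p.2.1 ≤ 1}

namespace PP

instance : PartialOrder PP where
  le p q := q.1.1 ≤ p.1.1 ∧ p.1.2.1 ≤ q.1.2.1 ∧ p.1.2.2 ≤ q.1.2.2
  le_refl p := ⟨le_refl _, le_refl _, le_refl _⟩
  le_trans p q r h h' := ⟨h'.1.trans h.1, h.2.1.trans h'.2.1, h.2.2.trans h'.2.2⟩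
  le_antisymm p q h h' :=
    Subtype.ext (Prod.ext (le_antisymm h'.1 h.1)
      (Prod.ext (le_antisymm h.2.1 h'.2.1) (le_antisymm h.2.2 h'.2.2)))

/-- The coordinate `a` of a point of `P`. -/
def a (p : PP) : ℝ := p.1.1
/-- The coordinate `b` of a point of `P`. -/
def b (p : PP) : ℝ := p.1.2.1
/-- The coordinate `c` of a point of `P`. -/
def c (p : PP) : ℝ := p.1.2.2

lemma le_def {p q : PP} : p ≤ q ↔ q.a ≤ p.a ∧ p.b ≤ q.b ∧ p.c ≤ q.c := Iff.rfl

end PP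

lemma Slev_mono (g : ℝ → ℝ) : Monotone (fun p : PP => Slev g p.a p.b p.c) :=
  fun _ _ h _ ht => ⟨h.1.trans ht.1, ht.2.1.trans h.2.1, ht.2.2.trans h.2.2⟩

/-- The persistence module `M_g : P ⥤ ModuleCat k` of a function `g : ℝ → ℝ`:
it assigns to `(a,b,c) ∈ P` the free `k`-module on the set of connected components of
the sublevel set `S(a,b,c)`, and to each relation `(a,b,c) ⊑ (a',b',c')` the `k`-linear
map sending the basis element corresponding to a component `C` of `S(a,b,c)` to the basis
element corresponding to the unique component of `S(a',b',c')` containing `C`. -/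
def Mg (k : Type) [Field k] (g : ℝ → ℝ) : PP ⥤ ModuleCat k :=
  compFunctor k (fun p : PP => Slev g p.a p.b p.c) (Slev_mono g)

namespace MgIndec

open Limits

lemma comps_subsingleton_of_preconnected {X : Type} [TopologicalSpace X] [PreconnectedSpace X] :
    Subsingleton (ConnectedComponents X) := by
  constructor
  intro a b
  obtain ⟨x, rfl⟩ := ConnectedComponents.surjective_coe a
  obtain ⟨y, rfl⟩ := ConnectedComponents.surjective_coe b
  rw [ConnectedComponents.coe_eq_coe', PreconnectedSpace.connectedComponent_eq_univ]
  trivial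

lemma comps_subsingleton_of_subsingleton {X : Type} [TopologicalSpace X] [h : Subsingleton X] :
    Subsingleton (ConnectedComponents X) := by
  constructor
  intro a b
  obtain ⟨x, rfl⟩ := ConnectedComponents.surjective_coe a
  obtain ⟨y, rfl⟩ := ConnectedComponents.surjective_coe b
  rw [Subsingleton.elim x y]

lemma slev_pt_subsingleton (g : ℝ → ℝ) (t c : ℝ) : Subsingleton (Slev g t t c) := by
  constructor
  rintro ⟨x, hx1, hx2, -⟩ ⟨y, hy1, hy2, -⟩
  apply Subtype.ext
  show x = y
  have : x = t := le_antisymm hx2 hx1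
  have : y = t := le_antisymm hy2 hy1
  simp [*]

lemma slev_eq_Icc {g : ℝ → ℝ} {c : ℝ} (hgc : ∀ t ∈ Set.Icc (0:ℝ) 1, g t ≤ c) :
    Slev g 0 1 c = Set.Icc 0 1 := by
  ext t
  simp only [Slev, Set.mem_Icc, Set.mem_setOf_eq]
  exact ⟨fun h => ⟨h.1, h.2.1⟩, fun h => ⟨h.1, h.2, hgc t ⟨h.1, h.2⟩⟩⟩

lemma slev_top_comps_subsingleton {g : ℝ → ℝ} {c : ℝ}
    (hgc : ∀ t ∈ Set.Icc (0:ℝ) 1, g t ≤ c) :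
    Subsingleton (_root_.ConnectedComponents (Slev g 0 1 c)) := by
  have : PreconnectedSpace (Slev g 0 1 c) := by
    rw [slev_eq_Icc hgc]
    exact Subtype.preconnectedSpace isPreconnected_Icc
  exact comps_subsingleton_of_preconnected

lemma finsupp_sub {k : Type} [Field k] {ι : Type} [Subsingleton ι] (f : ι →₀ k) (y : ι) :
    f = (f y) • Finsupp.single y 1 := by
  ext z
  rw [Subsingleton.elim z y]
  simp

variable {k : Type} [Field k] {g : ℝ → ℝ}

/-- Components of the sublevel set at a point of `PP`. -/
abbrev comps (g : ℝ → ℝ) (p : PP) : Type := _root_.ConnectedComponents (Slev g p.a p.b p.c)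

lemma Mg_map_single {p q : PP} (hpq : p ≤ q) (x : comps g p) :
    (Mg k g).map (homOfLE hpq) (Finsupp.single x 1) =
      Finsupp.single (compMap (Slev_mono g hpq) x) 1 := by
  show Finsupp.lmapDomain k k (compMap (Slev_mono g (leOfHom (homOfLE hpq))))
      (Finsupp.single x 1) = _
  rw [Finsupp.lmapDomain_apply, Finsupp.mapDomain_single]

/-- The scalar of a natural endomorphism at a component. -/
def sc (e : Mg k g ⟶ Mg k g) (p : PP) (x : comps g p) : k :=
  (show comps g p →₀ k from e.app p (Finsupp.single x 1)) x

lemma app_single_of_subsingleton (e : Mg k g ⟶ Mg k g) (q : PP)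
    (hs : Subsingleton (comps g q)) (y : comps g q) :
    e.app q (Finsupp.single y 1) = sc e q y • Finsupp.single y 1 := by
  have := hs
  exact finsupp_sub (show comps g q →₀ k from e.app q (Finsupp.single y 1)) y

lemma app_single_eq (e : Mg k g ⟶ Mg k g) {q p : PP} (hqp : q ≤ p)
    (hs : Subsingleton (comps g q)) (y : comps g q) (x : comps g p)
    (hx : compMap (Slev_mono g hqp) y = x) :
    e.app p (Finsupp.single x 1) = sc e q y • Finsupp.single x 1 := by
  have nat := e.naturality (homOfLE hqp)
  have h1 : e.app p ((Mg k g).map (homOfLE hqp) (Finsupp.single y 1)) =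
      (Mg k g).map (homOfLE hqp) (e.app q (Finsupp.single y 1)) :=
    ConcreteCategory.congr_hom nat (Finsupp.single y 1)
  rw [show ((Mg k g).map (homOfLE hqp)) (Finsupp.single y 1) =
      Finsupp.single x (1:k) from (Mg_map_single hqp y).trans (by rw [hx]),
    app_single_of_subsingleton e q hs y] at h1
  erw [map_smul] at h1
  rw [show ((Mg k g).map (homOfLE hqp)) (Finsupp.single y 1) =
      Finsupp.single x (1:k) from (Mg_map_single hqp y).trans (by rw [hx])] at h1
  exact h1

lemma sc_eq (e : Mg k g ⟶ Mg k g) {q p : PP} (hqp : q ≤ p)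
    (hsq : Subsingleton (comps g q)) (hsp : Subsingleton (comps g p))
    (y : comps g q) (x : comps g p) : sc e q y = sc e p x := by
  have h1 := app_single_eq e hqp hsq y x (Subsingleton.elim _ _)
  have h2 := app_single_of_subsingleton e p hsp x
  have h3 := h2.symm.trans h1
  have h4 := congrArg (fun f : comps g p →₀ k => f x)
    (show (sc e p x • Finsupp.single x (1:k)) = sc e q y • Finsupp.single x 1 from h3)
  simpa using h4.symm


/-- The reference point `(0,1,B₀)` of `PP`. -/
def pref (B₀ : ℝ) : PP := ⟨(0, 1, B₀), by norm_num⟩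

/-- The component of `0` in the sublevel set at the reference point. -/
def z0 (g : ℝ → ℝ) (B₀ : ℝ) (hB : ∀ t ∈ Set.Icc (0:ℝ) 1, g t ≤ B₀) : comps g (pref B₀) :=
  (⟨0, le_refl 0, zero_le_one, hB 0 ⟨le_refl 0, zero_le_one⟩⟩ :
    Slev g (pref B₀).a (pref B₀).b (pref B₀).c)

lemma pref_comps_subsingleton {B₀ : ℝ} (hB : ∀ t ∈ Set.Icc (0:ℝ) 1, g t ≤ B₀) :
    Subsingleton (comps g (pref B₀)) :=
  slev_top_comps_subsingleton hB

lemma e_app_single (e : Mg k g ⟶ Mg k g) {B₀ : ℝ} (hB : ∀ t ∈ Set.Icc (0:ℝ) 1, g t ≤ B₀)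
    (p : PP) (x : comps g p) :
    e.app p (Finsupp.single x 1) = sc e (pref B₀) (z0 g B₀ hB) • Finsupp.single x 1 := by
  obtain ⟨t, rfl⟩ := ConnectedComponents.surjective_coe x
  obtain ⟨ht1, ht2, ht3⟩ := t.2
  obtain ⟨hp1, hp2, hp3⟩ := p.2
  have h0t : (0:ℝ) ≤ t := hp1.trans ht1
  have ht1' : (t:ℝ) ≤ 1 := ht2.trans hp3
  set cm := max p.c B₀ with hcm
  have hgcm : ∀ s ∈ Set.Icc (0:ℝ) 1, g s ≤ cm := fun s hs => (hB s hs).trans (le_max_right _ _)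
  let q1 : PP := ⟨(t, t, p.c), h0t, le_refl _, ht1'⟩
  let y1 : comps g q1 := (⟨t, le_refl _, le_refl _, ht3⟩ : Slev g q1.a q1.b q1.c)
  have hs1 : Subsingleton (comps g q1) :=
    @comps_subsingleton_of_subsingleton _ _ (slev_pt_subsingleton g t p.c)
  have hq1p : q1 ≤ p := ⟨ht1, ht2, le_refl _⟩
  have hx : compMap (Slev_mono g hq1p) y1 = (t : _root_.ConnectedComponents _) := rfl
  rw [app_single_eq e hq1p hs1 y1 _ hx]
  congr 1
  let q2 : PP := ⟨(t, t, cm), h0t, le_refl _, ht1'⟩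
  let y2 : comps g q2 :=
    (⟨t, le_refl _, le_refl _, ht3.trans (le_max_left _ _)⟩ : Slev g q2.a q2.b q2.c)
  have hs2 : Subsingleton (comps g q2) :=
    @comps_subsingleton_of_subsingleton _ _ (slev_pt_subsingleton g t cm)
  let q3 : PP := ⟨(0, 1, cm), le_refl 0, zero_le_one, le_refl 1⟩
  let y3 : comps g q3 :=
    (⟨0, le_refl _, zero_le_one, hgcm 0 ⟨le_refl _, zero_le_one⟩⟩ : Slev g q3.a q3.b q3.c)
  have hs3 : Subsingleton (comps g q3) := slev_top_comps_subsingleton hgcm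
  have h12 : sc e q1 y1 = sc e q2 y2 :=
    sc_eq e (show q1 ≤ q2 from ⟨le_refl _, le_refl _, le_max_left _ _⟩) hs1 hs2 y1 y2
  have h23 : sc e q2 y2 = sc e q3 y3 :=
    sc_eq e (show q2 ≤ q3 from ⟨h0t, ht1', le_refl _⟩) hs2 hs3 y2 y3
  have hp3' : sc e (pref B₀) (z0 g B₀ hB) = sc e q3 y3 :=
    sc_eq e (show pref B₀ ≤ q3 from ⟨le_refl _, le_refl _, le_max_right _ _⟩) (pref_comps_subsingleton hB) hs3 _ y3
  rw [h12, h23, hp3']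

end MgIndec

/-- **Indecomposability of the persistence module of a one-parameter family of functions
on a point** (Theorem `thm:one_param_indec`).  If `g : ℝ → ℝ` is bounded above on `[0,1]`,
then the persistence module `M_g : P ⥤ ModuleCat k` is indecomposable: whenever `M_g`
is isomorphic in the functor category to a biproduct `A ⊞ B`, either `A` is pointwise
zero or `B` is pointwise zero. -/
theorem Mg_indecomposable (k : Type) [Field k] (g : ℝ → ℝ)
    (B₀ : ℝ) (hB : ∀ t ∈ Set.Icc (0:ℝ) 1, g t ≤ B₀)
    (A B : PP ⥤ ModuleCat k) (h : Mg k g ≅ A ⊞ B) :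
    (∀ p : PP, Limits.IsZero (A.obj p)) ∨ (∀ p : PP, Limits.IsZero (B.obj p)) := by
  open MgIndec Limits in
  classical
  let e : Mg k g ⟶ Mg k g := h.hom ≫ (biprod.fst ≫ biprod.inl) ≫ h.inv
  have hee : e ≫ e = e := by
    simp only [e, Category.assoc, Iso.inv_hom_id_assoc, biprod.inl_fst_assoc]
  set lam := sc e (pref B₀) (z0 g B₀ hB) with hlamdef
  have hmain : ∀ (p : PP) (x : comps g p),
      e.app p (Finsupp.single x 1) = lam • Finsupp.single x 1 :=
    fun p x => e_app_single e hB p x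
  have hlam2 : lam * lam = lam := by
    have h1 := hmain (pref B₀) (z0 g B₀ hB)
    have h2 : (e ≫ e).app (pref B₀) = e.app (pref B₀) := by rw [hee]
    rw [NatTrans.comp_app] at h2
    have h3 := ConcreteCategory.congr_hom h2 (Finsupp.single (z0 g B₀ hB) 1)
    erw [ModuleCat.comp_apply] at h3
    rw [h1] at h3
    erw [map_smul] at h3
    rw [h1] at h3
    have h4 := congrArg (fun f : comps g (pref B₀) →₀ k => f (z0 g B₀ hB))
      (show (lam • lam • Finsupp.single (z0 g B₀ hB) (1:k)) =
          lam • Finsupp.single (z0 g B₀ hB) 1 from h3)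
    simpa [mul_assoc] using h4
  have hcase : lam = 0 ∨ lam = 1 := by
    rcases mul_eq_zero.mp (show lam * (lam - 1) = 0 by
      rw [mul_sub, mul_one, hlam2, sub_self]) with h' | h'
    · exact Or.inl h'
    · exact Or.inr (sub_eq_zero.mp h')
  rcases hcase with h0 | h1
  · left
    have he0 : e = 0 := by
      ext p : 2
      rw [NatTrans.app_zero]
      apply ModuleCat.hom_ext
      apply Finsupp.lhom_ext
      intro a b
      rw [show (Finsupp.single a b) = b • Finsupp.single a (1:k) by
        rw [Finsupp.smul_single, smul_eq_mul, mul_one]]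
      erw [map_smul]
      erw [hmain p a]
      rw [h0]
      simp
      exact (show b • (0:k) • Finsupp.single a (1:k) = (0 : comps g p →₀ k) by simp)
    have hfi : (biprod.fst : A ⊞ B ⟶ A) ≫ (biprod.inl : A ⟶ A ⊞ B) = 0 := by
      have heq : h.inv ≫ (h.hom ≫ (biprod.fst ≫ biprod.inl) ≫ h.inv) ≫ h.hom =
          biprod.fst ≫ biprod.inl := by simp
      rw [← heq, show h.hom ≫ (biprod.fst ≫ biprod.inl) ≫ h.inv = e from rfl, he0]
      simp
    have hA : (𝟙 A : A ⟶ A) = 0 := by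
      have heq : (𝟙 A : A ⟶ A) = (biprod.inl : A ⟶ A ⊞ B) ≫
          ((biprod.fst : A ⊞ B ⟶ A) ≫ (biprod.inl : A ⟶ A ⊞ B)) ≫ (biprod.fst : A ⊞ B ⟶ A) := by
        simp
      rw [heq, hfi]; simp
    intro p
    rw [Limits.IsZero.iff_id_eq_zero]
    have := congrArg (fun φ : A ⟶ A => φ.app p) hA
    simpa using this
  · right
    have he1 : e = 𝟙 (Mg k g) := by
      ext p : 2
      rw [NatTrans.id_app]
      apply ModuleCat.hom_ext
      apply Finsupp.lhom_ext
      intro a b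
      have hsab : (Finsupp.single a b : comps g p →₀ k) = b • Finsupp.single a 1 := by
        rw [Finsupp.smul_single, smul_eq_mul, mul_one]
      conv_lhs => rw [hsab]
      erw [map_smul]
      erw [hmain p a]
      rw [h1]
      erw [one_smul, ModuleCat.id_apply]
      exact hsab.symm
    have he' : h.hom ≫ (biprod.snd ≫ biprod.inr) ≫ h.inv = 0 := by
      have htot : (biprod.fst ≫ biprod.inl + biprod.snd ≫ biprod.inr : A ⊞ B ⟶ A ⊞ B) =
          𝟙 (A ⊞ B) := biprod.total
      have hsum : h.hom ≫ ((biprod.fst ≫ biprod.inl) + (biprod.snd ≫ biprod.inr)) ≫ h.inv =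
          𝟙 (Mg k g) := by rw [htot]; simp
      rw [Preadditive.add_comp, Preadditive.comp_add] at hsum
      rw [show h.hom ≫ (biprod.fst ≫ biprod.inl) ≫ h.inv = e from rfl, he1] at hsum
      have : 𝟙 (Mg k g) + h.hom ≫ (biprod.snd ≫ biprod.inr) ≫ h.inv =
          𝟙 (Mg k g) + 0 := by rw [add_zero]; exact hsum
      exact add_left_cancel this
    have hfi : (biprod.snd : A ⊞ B ⟶ B) ≫ (biprod.inr : B ⟶ A ⊞ B) = 0 := by
      have heq : h.inv ≫ (h.hom ≫ (biprod.snd ≫ biprod.inr) ≫ h.inv) ≫ h.hom =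
          biprod.snd ≫ biprod.inr := by simp
      rw [← heq, he']
      simp
    have hBzero : (𝟙 B : B ⟶ B) = 0 := by
      have heq : (𝟙 B : B ⟶ B) = (biprod.inr : B ⟶ A ⊞ B) ≫
          ((biprod.snd : A ⊞ B ⟶ B) ≫ (biprod.inr : B ⟶ A ⊞ B)) ≫ (biprod.snd : A ⊞ B ⟶ B) := by
        simp
      rw [heq, hfi]; simp
    intro p
    rw [Limits.IsZero.iff_id_eq_zero]
    have := congrArg (fun φ : B ⟶ B => φ.app p) hBzero
    simpa using this

end
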